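/- Let Φ ∈ ℂ^{M×N} and let δ ≥ 0 be a restricted isometry constant of order t for Φ. If V ∈ ℂ^{N×L} and R ⊆ {1,…,N} satisfy |R ∪ supp(V)| ≤ t, then ‖[(I − Φ*Φ)V]_(R)‖_F ≤ δ · ‖V‖_F. -/

import Mathlib

open Matrix BigOperators

/-- Frobenius norm of a complex matrix. -/
noncomputable def frobNorm {m n : Type*} [Fintype m] [Fintype n] (A : Matrix m n ℂ) : ℝ :=
  Real.sqrt (∑ i, ∑ j, ‖A i j‖ ^ 2)

open scoped Classical in
/-- The row support of a matrix: indices of its nonzero rows. -/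
noncomputable def rowSupp {N L : ℕ} (X : Matrix (Fin N) (Fin L) ℂ) : Finset (Fin N) :=
  Finset.univ.filter (fun i => X i ≠ 0)

/-- `X_(T)`: the matrix obtained from `X` by zeroing every row with index outside `T`. -/
def rowRestrict {N L : ℕ} (T : Finset (Fin N)) (X : Matrix (Fin N) (Fin L) ℂ) :
    Matrix (Fin N) (Fin L) ℂ :=
  fun i j => if i ∈ T then X i j else 0

/-- Euclidean norm of a complex vector. -/
noncomputable def vecNorm {ι : Type*} [Fintype ι] (v : ι → ℂ) : ℝ :=
  Real.sqrt (∑ i, ‖v i‖ ^ 2)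

/-- `Φ_T`: the submatrix of columns of `Φ` indexed by `T`. -/
def colSub {M N : ℕ} (Φ : Matrix (Fin M) (Fin N) ℂ) (T : Finset (Fin N)) :
    Matrix (Fin M) {x // x ∈ T} ℂ :=
  fun i j => Φ i j.val

/-- `X_{(T)}`: the submatrix of rows of `X` indexed by `T`. -/
def rowSub {N L : ℕ} (T : Finset (Fin N)) (X : Matrix (Fin N) (Fin L) ℂ) :
    Matrix {x // x ∈ T} (Fin L) ℂ :=
  fun i j => X i.val j

/-- The set of values `‖R v‖` over unit vectors `v` (the "singular value range"). -/
noncomputable def sigmaSet {L : ℕ} (R : Matrix (Fin L) (Fin L) ℂ) : Set ℝ :=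
  {c | ∃ v : Fin L → ℂ, vecNorm v = 1 ∧ c = vecNorm (R.mulVec v)}

/-- The largest singular value of `R`. -/
noncomputable def sigmaMax {L : ℕ} (R : Matrix (Fin L) (Fin L) ℂ) : ℝ :=
  sSup (sigmaSet R)

/-- The smallest singular value of `R` (for invertible `R`). -/
noncomputable def sigmaMin {L : ℕ} (R : Matrix (Fin L) (Fin L) ℂ) : ℝ :=
  sInf (sigmaSet R)

/-- Spectral (operator) norm of a square complex matrix. -/
noncomputable def specNorm {ι : Type*} [Fintype ι] (A : Matrix ι ι ℂ) : ℝ :=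
  sSup {c | ∃ v : ι → ℂ, vecNorm v = 1 ∧ c = vecNorm (A.mulVec v)}

/-- `δ` is a restricted isometry constant (RIC) of order `t` for `A`, relative to matrices with
`L` columns: `(1-δ)‖Z‖_F² ≤ ‖AZ‖_F² ≤ (1+δ)‖Z‖_F²` for every `t` row-sparse `Z`. -/
def IsRIC {M N : ℕ} (L : ℕ) (A : Matrix (Fin M) (Fin N) ℂ) (t : ℕ) (δ : ℝ) : Prop :=
  ∀ Z : Matrix (Fin N) (Fin L) ℂ, (rowSupp Z).card ≤ t →
    (1 - δ) * frobNorm Z ^ 2 ≤ frobNorm (A * Z) ^ 2 ∧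
      frobNorm (A * Z) ^ 2 ≤ (1 + δ) * frobNorm Z ^ 2

/-- `γ` is a preconditioned restricted isometry constant (P-RIC) of order `t` for `Φ`:
`(1-γ)‖Z‖_F² ≤ Re tr((ΦZ)* (ΦΦ*)⁻¹ (ΦZ))` for every `t` row-sparse `Z`. -/
def IsPRIC {M N : ℕ} (L : ℕ) (Φ : Matrix (Fin M) (Fin N) ℂ) (t : ℕ) (γ : ℝ) : Prop :=
  ∀ Z : Matrix (Fin N) (Fin L) ℂ, (rowSupp Z).card ≤ t →
    (1 - γ) * frobNorm Z ^ 2 ≤ (Matrix.trace ((Φ * Z)ᴴ * ((Φ * Φᴴ)⁻¹ * (Φ * Z)))).re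

/-- `θ` is an upper restricted isometry constant of order `t` for `A`:
`‖AZ‖_F² ≤ (1+θ)‖Z‖_F²` for every `t` row-sparse `Z`. -/
def IsUpperRIC {M N : ℕ} (L : ℕ) (A : Matrix (Fin M) (Fin N) ℂ) (t : ℕ) (θ : ℝ) : Prop :=
  ∀ Z : Matrix (Fin N) (Fin L) ℂ, (rowSupp Z).card ≤ t →
    frobNorm (A * Z) ^ 2 ≤ (1 + θ) * frobNorm Z ^ 2

/-- The least-squares feedback of `X` on the index set `T`:
rows outside `T` are zero and on `T` it equals
`X_{(T)} + (Φ_T* Φ_T)⁻¹ Φ_T* Φ_{T^c} X_{(T^c)}`. -/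
noncomputable def feedback {M N L : ℕ} (Φ : Matrix (Fin M) (Fin N) ℂ) (T : Finset (Fin N))
    (X : Matrix (Fin N) (Fin L) ℂ) : Matrix (Fin N) (Fin L) ℂ :=
  fun i j =>
    if h : i ∈ T then
      (rowSub T X +
        ((colSub Φ T)ᴴ * colSub Φ T)⁻¹ * (colSub Φ T)ᴴ *
          (colSub Φ Tᶜ * rowSub Tᶜ X)) ⟨i, h⟩ j
    else 0

section ripAux

noncomputable def ipM {N L : ℕ} (A B : Matrix (Fin N) (Fin L) ℂ) : ℂ :=
  ∑ i, ∑ j, (starRingEnd ℂ) (A i j) * B i j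

variable {M N L : ℕ}

lemma ipM_self_re (A : Matrix (Fin N) (Fin L) ℂ) :
    (ipM A A).re = ∑ i, ∑ j, ‖A i j‖ ^ 2 := by
  simp only [ipM, Complex.re_sum]
  refine Finset.sum_congr rfl fun i _ => Finset.sum_congr rfl fun j _ => ?_
  rw [mul_comm, Complex.mul_conj]
  simp [Complex.sq_norm]

lemma frobSq (A : Matrix (Fin N) (Fin L) ℂ) :
    frobNorm A ^ 2 = (ipM A A).re := by
  rw [ipM_self_re, frobNorm, Real.sq_sqrt]
  positivity

lemma frobNonneg (A : Matrix (Fin N) (Fin L) ℂ) : 0 ≤ frobNorm A :=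
  Real.sqrt_nonneg _

lemma ipM_eq_trace (A B : Matrix (Fin N) (Fin L) ℂ) :
    ipM A B = Matrix.trace (Aᴴ * B) := by
  simp only [ipM, Matrix.trace, Matrix.mul_apply, Matrix.conjTranspose_apply,
    Matrix.diag_apply]
  exact Finset.sum_comm

lemma ipM_mul (Φ : Matrix (Fin M) (Fin N) ℂ) (X Y : Matrix (Fin N) (Fin L) ℂ) :
    ipM (Φ * X) (Φ * Y) = ipM X (Φᴴ * (Φ * Y)) := by
  rw [ipM_eq_trace, ipM_eq_trace, Matrix.conjTranspose_mul, Matrix.mul_assoc]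

lemma ipM_swap (A B : Matrix (Fin N) (Fin L) ℂ) :
    ipM B A = (starRingEnd ℂ) (ipM A B) := by
  simp only [ipM, map_sum, _root_.map_mul, Complex.conj_conj]
  exact Finset.sum_congr rfl fun i _ => Finset.sum_congr rfl fun j _ => mul_comm _ _

lemma ipM_add_left (A B C : Matrix (Fin N) (Fin L) ℂ) :
    ipM (A + B) C = ipM A C + ipM B C := by
  simp [ipM, add_mul, Finset.sum_add_distrib, Matrix.add_apply]

lemma ipM_add_right (A B C : Matrix (Fin N) (Fin L) ℂ) :
    ipM A (B + C) = ipM A B + ipM A C := by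
  simp [ipM, mul_add, Finset.sum_add_distrib, Matrix.add_apply]

lemma ipM_sub_right (A B C : Matrix (Fin N) (Fin L) ℂ) :
    ipM A (B - C) = ipM A B - ipM A C := by
  simp [ipM, mul_sub, Finset.sum_sub_distrib, Matrix.sub_apply]

lemma ipM_smul_right (c : ℂ) (A B : Matrix (Fin N) (Fin L) ℂ) :
    ipM A (c • B) = c * ipM A B := by
  simp [ipM, Finset.mul_sum, Matrix.smul_apply]
  exact Finset.sum_congr rfl fun i _ => Finset.sum_congr rfl fun j _ => by ring

lemma re_add_self (A B : Matrix (Fin N) (Fin L) ℂ) :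
    (ipM (A + B) (A + B)).re = (ipM A A).re + 2 * (ipM A B).re + (ipM B B).re := by
  rw [ipM_add_left, ipM_add_right, ipM_add_right]
  have h : ipM B A = (starRingEnd ℂ) (ipM A B) := ipM_swap A B
  simp [h, Complex.add_re, Complex.conj_re]
  ring

lemma ipM_neg_right (A B : Matrix (Fin N) (Fin L) ℂ) :
    ipM A (-B) = -ipM A B := by
  have := ipM_smul_right (-1 : ℂ) A B
  simpa using this

lemma ipM_neg_left (A B : Matrix (Fin N) (Fin L) ℂ) :
    ipM (-A) B = -ipM A B := by
  rw [ipM_swap, ipM_neg_right, map_neg, ← ipM_swap]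

lemma re_sub_self (A B : Matrix (Fin N) (Fin L) ℂ) :
    (ipM (A - B) (A - B)).re = (ipM A A).re - 2 * (ipM A B).re + (ipM B B).re := by
  rw [sub_eq_add_neg, re_add_self, ipM_neg_right, ipM_neg_left, ipM_neg_right, neg_neg]
  simp [Complex.neg_re]
  ring

lemma mem_rowSupp {X : Matrix (Fin N) (Fin L) ℂ} {i : Fin N} :
    i ∈ rowSupp X ↔ X i ≠ 0 := by
  classical
  simp [rowSupp]

lemma rowSupp_rowRestrict (R : Finset (Fin N)) (Z : Matrix (Fin N) (Fin L) ℂ) :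
    rowSupp (rowRestrict R Z) ⊆ R := by
  intro i hi
  rw [mem_rowSupp] at hi
  by_contra h
  exact hi (funext fun j => by simp [rowRestrict, h])

lemma rowSupp_add (A B : Matrix (Fin N) (Fin L) ℂ) :
    rowSupp (A + B) ⊆ rowSupp A ∪ rowSupp B := by
  intro i hi
  rw [mem_rowSupp] at hi
  by_contra h
  simp only [Finset.mem_union, mem_rowSupp, not_or, not_not] at h
  exact hi (funext fun j => by simp [Matrix.add_apply, congrFun h.1 j, congrFun h.2 j])

lemma rowSupp_sub (A B : Matrix (Fin N) (Fin L) ℂ) :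
    rowSupp (A - B) ⊆ rowSupp A ∪ rowSupp B := by
  intro i hi
  rw [mem_rowSupp] at hi
  by_contra h
  simp only [Finset.mem_union, mem_rowSupp, not_or, not_not] at h
  exact hi (funext fun j => by simp [Matrix.sub_apply, congrFun h.1 j, congrFun h.2 j])

lemma rowSupp_smul (c : ℂ) (A : Matrix (Fin N) (Fin L) ℂ) :
    rowSupp (c • A) ⊆ rowSupp A := by
  intro i hi
  rw [mem_rowSupp] at hi
  rw [mem_rowSupp]
  intro h
  exact hi (funext fun j => by simp [Matrix.smul_apply, congrFun h j])

/-- Key bilinear RIP bound. -/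
lemma key_bound {M N L t : ℕ} (Φ : Matrix (Fin M) (Fin N) ℂ) (δ : ℝ)
    (hRIC : IsRIC L Φ t δ) (X Y : Matrix (Fin N) (Fin L) ℂ) (S : Finset (Fin N))
    (hX : rowSupp X ⊆ S) (hY : rowSupp Y ⊆ S) (hS : S.card ≤ t) :
    |(ipM (Φ * X) (Φ * Y)).re - (ipM X Y).re| ≤
      δ / 2 * (frobNorm X ^ 2 + frobNorm Y ^ 2) := by
  have hq : ∀ Z : Matrix (Fin N) (Fin L) ℂ, (rowSupp Z).card ≤ t →
      |frobNorm (Φ * Z) ^ 2 - frobNorm Z ^ 2| ≤ δ * frobNorm Z ^ 2 := by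
    intro Z hZ
    obtain ⟨h1, h2⟩ := hRIC Z hZ
    rw [abs_le]
    constructor <;> nlinarith [h1, h2]
  have hadd : (rowSupp (X + Y)).card ≤ t :=
    le_trans (Finset.card_le_card (le_trans (rowSupp_add X Y)
      (Finset.union_subset hX hY))) hS
  have hsub : (rowSupp (X - Y)).card ≤ t :=
    le_trans (Finset.card_le_card (le_trans (rowSupp_sub X Y)
      (Finset.union_subset hX hY))) hS
  have q1 := hq (X + Y) hadd
  have q2 := hq (X - Y) hsub
  have e1 : frobNorm (Φ * (X + Y)) ^ 2 =
      frobNorm (Φ * X) ^ 2 + 2 * (ipM (Φ * X) (Φ * Y)).re + frobNorm (Φ * Y) ^ 2 := by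
    rw [Matrix.mul_add, frobSq, re_add_self, ← frobSq, ← frobSq]
  have e2 : frobNorm (Φ * (X - Y)) ^ 2 =
      frobNorm (Φ * X) ^ 2 - 2 * (ipM (Φ * X) (Φ * Y)).re + frobNorm (Φ * Y) ^ 2 := by
    rw [Matrix.mul_sub, frobSq, re_sub_self, ← frobSq, ← frobSq]
  have e3 : frobNorm (X + Y) ^ 2 =
      frobNorm X ^ 2 + 2 * (ipM X Y).re + frobNorm Y ^ 2 := by
    rw [frobSq, re_add_self, ← frobSq, ← frobSq]
  have e4 : frobNorm (X - Y) ^ 2 =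
      frobNorm X ^ 2 - 2 * (ipM X Y).re + frobNorm Y ^ 2 := by
    rw [frobSq, re_sub_self, ← frobSq, ← frobSq]
  rw [e1, e3] at q1
  rw [e2, e4] at q2
  rw [abs_le] at q1 q2 ⊢
  constructor <;> nlinarith [q1.1, q1.2, q2.1, q2.2]

end ripAux


lemma frob_eq_zero {N L : ℕ} {V : Matrix (Fin N) (Fin L) ℂ} (h : frobNorm V = 0) :
    V = 0 := by
  have h2 : (∑ i, ∑ j, ‖V i j‖ ^ 2) = 0 := by
    have hnn : (0:ℝ) ≤ ∑ i, ∑ j, ‖V i j‖ ^ 2 :=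
      Finset.sum_nonneg fun i _ => Finset.sum_nonneg fun j _ => sq_nonneg _
    rw [frobNorm] at h
    exact (Real.sqrt_eq_zero hnn).mp h
  funext i j
  have hnn : ∀ i ∈ Finset.univ, (0:ℝ) ≤ ∑ j, ‖V i j‖ ^ 2 :=
    fun i _ => Finset.sum_nonneg fun j _ => sq_nonneg _
  have hi := (Finset.sum_eq_zero_iff_of_nonneg hnn).mp h2 i (Finset.mem_univ i)
  have hnn2 : ∀ j ∈ Finset.univ, (0:ℝ) ≤ ‖V i j‖ ^ 2 := fun j _ => sq_nonneg _
  have hj := (Finset.sum_eq_zero_iff_of_nonneg hnn2).mp hi j (Finset.mem_univ j)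
  have : ‖V i j‖ = 0 := by nlinarith [norm_nonneg (V i j)]
  simpa using this

lemma frobSq_smul {N L : ℕ} (c : ℝ) (A : Matrix (Fin N) (Fin L) ℂ) :
    frobNorm ((c:ℂ) • A) ^ 2 = c ^ 2 * frobNorm A ^ 2 := by
  rw [frobSq, frobSq]
  have h1 : ipM ((c:ℂ) • A) ((c:ℂ) • A) = (c:ℂ) * (starRingEnd ℂ) ((c:ℂ) * ipM A A) := by
    rw [ipM_smul_right, ipM_swap, ipM_smul_right]
  rw [h1, _root_.map_mul, Complex.conj_ofReal, ← mul_assoc, ← Complex.ofReal_mul,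
    Complex.re_ofReal_mul, Complex.conj_re]
  ring

/-- RIP restricted-rows estimate (second part of Lemma 4 of the paper). -/
theorem stmt1 {M N L t : ℕ} (Φ : Matrix (Fin M) (Fin N) ℂ) (δ : ℝ) (hδ : 0 ≤ δ)
    (hRIC : IsRIC L Φ t δ) (V : Matrix (Fin N) (Fin L) ℂ) (R : Finset (Fin N))
    (hsupp : (R ∪ rowSupp V).card ≤ t) :
    frobNorm (rowRestrict R ((1 - Φᴴ * Φ) * V)) ≤ δ * frobNorm V := by
  set Z : Matrix (Fin N) (Fin L) ℂ := (1 - Φᴴ * Φ) * V with hZ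
  set W : Matrix (Fin N) (Fin L) ℂ := rowRestrict R Z with hW
  -- key identity: ‖W‖² = Re⟨W,V⟩ - Re⟨ΦW,ΦV⟩
  have hWZ : ipM W W = ipM W Z := by
    simp only [ipM]
    refine Finset.sum_congr rfl fun i _ => Finset.sum_congr rfl fun j _ => ?_
    by_cases h : i ∈ R
    · simp [hW, rowRestrict, h]
    · simp [hW, rowRestrict, h]
  have hZsplit : Z = V - Φᴴ * (Φ * V) := by
    rw [hZ, Matrix.sub_mul, Matrix.one_mul, Matrix.mul_assoc]
  have hid : frobNorm W ^ 2 = (ipM W V).re - (ipM (Φ * W) (Φ * V)).re := by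
    rw [frobSq, hWZ, hZsplit, ipM_sub_right, ipM_mul]
    simp [Complex.sub_re]
  have hWnn := frobNonneg W
  have hVnn := frobNonneg V
  rcases eq_or_lt_of_le hWnn with hW0 | hWpos
  · rw [← hW0]; exact mul_nonneg hδ (frobNonneg V)
  rcases eq_or_lt_of_le hVnn with hV0 | hVpos
  · exfalso
    have : V = 0 := frob_eq_zero hV0.symm
    subst this
    have : W = 0 := by
      funext i j
      simp [hW, rowRestrict, hZ, Matrix.mul_apply]
    rw [this] at hWpos
    simp [frobNorm] at hWpos
  -- apply key bound with Y = (fW/fV) • V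
  set c : ℝ := frobNorm W / frobNorm V with hc
  have hcpos : 0 < c := div_pos hWpos hVpos
  have hXsub : rowSupp W ⊆ R ∪ rowSupp V :=
    le_trans (rowSupp_rowRestrict R Z) Finset.subset_union_left
  have hYsub : rowSupp ((c:ℂ) • V) ⊆ R ∪ rowSupp V :=
    le_trans (rowSupp_smul _ V) Finset.subset_union_right
  have key := key_bound Φ δ hRIC W ((c:ℂ) • V) (R ∪ rowSupp V) hXsub hYsub hsupp
  have hmsmul : Φ * ((c:ℂ) • V) = (c:ℂ) • (Φ * V) := Matrix.mul_smul Φ (c:ℂ) V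
  have hEq1 : (ipM (Φ * W) (Φ * ((c:ℂ) • V))).re = c * (ipM (Φ * W) (Φ * V)).re := by
    rw [hmsmul, ipM_smul_right]
    exact Complex.re_ofReal_mul c _
  have hEq2 : (ipM W ((c:ℂ) • V)).re = c * (ipM W V).re := by
    rw [ipM_smul_right]
    exact Complex.re_ofReal_mul c _
  have hYsq : frobNorm ((c:ℂ) • V) ^ 2 = frobNorm W ^ 2 := by
    rw [frobSq_smul, hc]
    field_simp
  rw [hEq1, hEq2, hYsq] at key
  have hLHS : (ipM (Φ * W) (Φ * V)).re - (ipM W V).re = -(frobNorm W ^ 2) := by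
    rw [hid]; ring
  have key2 : c * frobNorm W ^ 2 ≤ δ * frobNorm W ^ 2 := by
    have : |c * ((ipM (Φ * W) (Φ * V)).re - (ipM W V).re)| ≤
        δ / 2 * (frobNorm W ^ 2 + frobNorm W ^ 2) := by
      rw [mul_sub]; exact key
    rw [hLHS] at this
    rw [abs_mul, abs_neg, abs_of_nonneg (sq_nonneg (frobNorm W)),
      abs_of_pos hcpos] at this
    linarith
  have hcle : c ≤ δ := by
    have hW2pos : 0 < frobNorm W ^ 2 := pow_pos hWpos 2
    nlinarith
  rw [hc, div_le_iff₀ hVpos] at hcle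
  linarith
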